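/- Let A be a real m×m matrix such that ⟨Ay, y⟩ ≥ λ_A ‖y‖² for all y ∈ ℝ^m, where λ_A > 0, and let ω : ℝ → ℝ^m be continuous with sublinear growth. If moreover ω is η-Hölder continuous on every compact interval for some η ∈ (0,1), then the function u ↦ Z(θ_u ω) is η-Hölder continuous on every compact interval [T_1, T_2] with T_1 < T_2. -/

import Mathlib

set_option maxHeartbeats 1000000
set_option synthInstance.maxHeartbeats 400000

open scoped RealInnerProductSpace
open MeasureTheory Filter

/-- The stationary Ornstein–Uhlenbeck process:
`Z(θ_u ω) = -A ∫_{-∞}^0 exp(rA) (ω(r+u) - ω(u)) dr`. -/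
noncomputable def OUstat {m : ℕ} (A : Matrix (Fin m) (Fin m) ℝ)
    (ω : ℝ → EuclideanSpace ℝ (Fin m)) (u : ℝ) : EuclideanSpace ℝ (Fin m) :=
  -(Matrix.toEuclideanLin A (∫ r in Set.Iic (0 : ℝ),
      Matrix.toEuclideanLin (NormedSpace.exp (r • A)) (ω (r + u) - ω u)))

section OUaux

open NormedSpace Set


open NormedSpace Set

variable {m : ℕ}
local notation "E" => EuclideanSpace ℝ (Fin m)

noncomputable local instance OU.instQ : NormedAlgebra ℚ (E →L[ℝ] E) :=
  NormedAlgebra.restrictScalars ℚ ℝ _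

lemma OU.exp_int {c : ℝ} (hc : 0 < c) :
    IntegrableOn (fun r : ℝ => Real.exp (c * r)) (Set.Iic 0) := by
  have h2 : IntegrableOn (fun x : ℝ => Real.exp (-c*x)) (Set.Ici 0) :=
    Iff.mpr integrableOn_Ici_iff_integrableOn_Ioi (exp_neg_integrableOn_Ioi 0 hc)
  have := ((Measure.measurePreserving_neg (volume : Measure ℝ)).integrableOn_comp_preimage
    (Homeomorph.neg ℝ).measurableEmbedding).mpr h2
  simpa [Function.comp_def] using this

lemma OU.exp_deriv_apply (B : E →L[ℝ] E) (y : E) (t : ℝ) :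
    HasDerivAt (fun t : ℝ => exp (t • B) y) (B (exp (t • B) y)) t := by
  have h1 : HasDerivAt (fun t : ℝ => exp (t • B)) (B * exp (t • B)) t :=
    hasDerivAt_exp_smul_const' B t
  simpa using h1.clm_apply (hasDerivAt_const t y)

lemma OU.decay (B : E →L[ℝ] E) (lamA : ℝ)
    (hA : ∀ y : E, lamA * ‖y‖ ^ 2 ≤ ⟪B y, y⟫) :
    ∀ r ≤ (0:ℝ), ∀ y : E, ‖exp (r • B) y‖ ≤ Real.exp (lamA * r) * ‖y‖ := by
  intro r hr y
  set f : ℝ → E := fun t => exp (t • B) y with hf_def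
  have hf : ∀ t, HasDerivAt f (B (f t)) t := OU.exp_deriv_apply B y
  set c : ℝ := -(2*lamA) with hc
  set ψ : ℝ → ℝ := fun t => Real.exp (c*t) * ⟪f t, f t⟫ with hψ_def
  have hψ : ∀ t, HasDerivAt ψ (Real.exp (c*t) * c * ⟪f t, f t⟫
      + Real.exp (c*t) * (⟪B (f t), f t⟫ + ⟪f t, B (f t)⟫)) t := by
    intro t
    have he : HasDerivAt (fun t : ℝ => Real.exp (c*t)) (Real.exp (c*t) * c) t := by
      simpa using ((hasDerivAt_id t).const_mul c).exp
    have hi : HasDerivAt (fun t => ⟪f t, f t⟫) (⟪B (f t), f t⟫ + ⟪f t, B (f t)⟫) t := by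
      simpa [add_comm] using (hf t).inner ℝ (hf t)
    exact he.mul hi
  have hmono : Monotone ψ := by
    apply monotone_of_deriv_nonneg
    · exact fun t => (hψ t).differentiableAt
    · intro t
      rw [(hψ t).deriv]
      have h1 : lamA * ‖f t‖ ^ 2 ≤ ⟪B (f t), f t⟫ := hA (f t)
      have h2 : ⟪f t, B (f t)⟫ = ⟪B (f t), f t⟫ := real_inner_comm _ _
      have h3 : ⟪f t, f t⟫ = ‖f t‖ ^ 2 := real_inner_self_eq_norm_sq (f t)
      have h4 : (0:ℝ) < Real.exp (c*t) := Real.exp_pos _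
      rw [h2, h3]
      have hexpr : Real.exp (c*t) * c * ‖f t‖^2 + Real.exp (c*t) * (⟪B (f t), f t⟫ + ⟪B (f t), f t⟫)
          = Real.exp (c*t) * (c * ‖f t‖^2 + 2 * ⟪B (f t), f t⟫) := by ring
      rw [hexpr]
      apply mul_nonneg (le_of_lt h4)
      have : c = -(2*lamA) := hc
      nlinarith [h1]
  have key : ψ r ≤ ψ 0 := hmono hr
  have hf0 : f 0 = y := by
    show exp ((0:ℝ) • B) y = y
    have hz : (0:ℝ) • B = 0 := zero_smul ℝ B
    rw [hz, NormedSpace.exp_zero, ContinuousLinearMap.one_apply]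
  have hψ0 : ψ 0 = ‖y‖ ^ 2 := by
    show Real.exp (c * 0) * ⟪f 0, f 0⟫ = ‖y‖ ^ 2
    rw [hf0, mul_zero, Real.exp_zero, one_mul, real_inner_self_eq_norm_sq]
  have hfr : ‖f r‖ ^ 2 ≤ (Real.exp (lamA * r) * ‖y‖) ^ 2 := by
    have h3 : ⟪f r, f r⟫ = ‖f r‖ ^ 2 := real_inner_self_eq_norm_sq (f r)
    rw [hψ0, hψ_def] at key
    simp only [h3] at key
    have hexp : Real.exp (c*r) = (Real.exp (lamA * r))⁻¹ ^ 2 := by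
      rw [hc, ← Real.exp_neg, ← Real.exp_nat_mul]
      ring_nf
    have h5 : (0:ℝ) < Real.exp (lamA * r) := Real.exp_pos _
    rw [mul_pow]
    rw [hexp] at key
    calc ‖f r‖ ^ 2 = Real.exp (lamA*r)^2 * ((Real.exp (lamA*r))⁻¹^2 * ‖f r‖^2) := by
          field_simp
      _ ≤ Real.exp (lamA*r)^2 * ‖y‖^2 := by
          apply mul_le_mul_of_nonneg_left key (le_of_lt (pow_pos h5 2))
  have := Real.sqrt_le_sqrt hfr
  rwa [Real.sqrt_sq (norm_nonneg _), Real.sqrt_sq (by positivity)] at this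

lemma OU.cont_CLM : Continuous (Matrix.toEuclideanCLM (𝕜 := ℝ) (n := Fin m)) := by
  let L : Matrix (Fin m) (Fin m) ℝ →ₗ[ℝ] (E →L[ℝ] E) :=
    { toFun := Matrix.toEuclideanCLM (𝕜 := ℝ), map_add' := map_add _,
      map_smul' := _root_.map_smul _ }
  exact L.continuous_of_finiteDimensional

section
open scoped Matrix.Norms.L2Operator

lemma OU.exp_comm (A : Matrix (Fin m) (Fin m) ℝ) (r : ℝ) :
    Matrix.toEuclideanCLM (𝕜 := ℝ) (exp (r • A))
      = exp (r • Matrix.toEuclideanCLM (𝕜 := ℝ) A) := by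
  letI : NormedAlgebra ℚ (Matrix (Fin m) (Fin m) ℝ) := NormedAlgebra.restrictScalars ℚ ℝ _
  have h := map_exp (Matrix.toEuclideanCLM (𝕜 := ℝ) (n := Fin m)) OU.cont_CLM (r • A)
  rw [h, _root_.map_smul]

end

lemma OU.exp_split (B : E →L[ℝ] E) (r u : ℝ) :
    exp (r • B) = exp ((-u) • B) * exp ((r+u) • B) := by
  have hcomm : Commute ((-u) • B) ((r+u) • B) := by
    show _ * _ = _ * _
    ext x
    simp [ContinuousLinearMap.mul_apply, _root_.map_smul, smul_smul, mul_comm]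
  rw [← NormedSpace.exp_add_of_commute hcomm]
  congr 1
  module

lemma OU.growth (ω : ℝ → E) (hω : Continuous ω)
    (h1 : Tendsto (fun t : ℝ => ‖ω t‖ / |t|) atTop (nhds 0))
    (h2 : Tendsto (fun t : ℝ => ‖ω t‖ / |t|) atBot (nhds 0)) :
    ∃ K : ℝ, 0 ≤ K ∧ ∀ t, ‖ω t‖ ≤ K + |t| := by
  obtain ⟨N₁, hN₁⟩ := eventually_atTop.mp (h1.eventually_lt_const one_pos)
  obtain ⟨N₂, hN₂⟩ := eventually_atBot.mp (h2.eventually_lt_const one_pos)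
  set N : ℝ := max (max N₁ (-N₂)) 1 with hN
  have hN1 : (1:ℝ) ≤ N := le_max_right _ _
  obtain ⟨M, hM⟩ := (isCompact_Icc (a := -N) (b := N)).exists_bound_of_continuousOn
    hω.continuousOn
  refine ⟨max M 0, le_max_right _ _, fun t => ?_⟩
  by_cases ht : |t| ≤ N
  · have : t ∈ Icc (-N) N := abs_le.mp ht
    calc ‖ω t‖ ≤ M := hM t this
      _ ≤ max M 0 + |t| := le_add_of_le_of_nonneg (le_max_left _ _) (abs_nonneg t)
  · push_neg at ht
    have htpos : (0:ℝ) < |t| := lt_of_lt_of_le one_pos (le_trans hN1 ht.le)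
    have hlt : ‖ω t‖ / |t| < 1 := by
      rcases abs_cases t with ⟨habs, _⟩ | ⟨habs, _⟩
      · apply hN₁
        have : N₁ ≤ N := le_trans (le_max_left _ _) (le_max_left _ _)
        linarith [ht]
      · apply hN₂
        have : -N₂ ≤ N := le_trans (le_max_right _ _) (le_max_left _ _)
        linarith [ht]
    have : ‖ω t‖ < |t| := (div_lt_one htpos).mp hlt
    have h0 : (0:ℝ) ≤ max M 0 := le_max_right _ _
    linarith


lemma OU.weight {lamA K : ℝ} (hlam : 0 < lamA) (hK : 0 ≤ K) :
    ∀ v ≤ (0:ℝ), (K + |v|) * Real.exp (lamA * v) ≤ (K + 2/lamA) * Real.exp ((lamA/2) * v) := by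
  intro v hv
  have habs : |v| = -v := abs_of_nonpos hv
  set a : ℝ := Real.exp ((lamA/2) * v) with ha
  have ha0 : 0 < a := Real.exp_pos _
  have ha1 : a ≤ 1 := Real.exp_le_one_iff.mpr (by nlinarith)
  have hprod : a * Real.exp (-((lamA/2) * v)) = 1 := by
    rw [ha, ← Real.exp_add]; simp
  have h1 : -((lamA/2)*v) + 1 ≤ Real.exp (-((lamA/2)*v)) := Real.add_one_le_exp _
  -- (-v) * a ≤ 2/lamA
  have h2 : (-v) * a ≤ 2/lamA := by
    have := mul_le_mul_of_nonneg_left h1 ha0.le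
    rw [hprod] at this
    have h3 : a * (-((lamA/2)*v)) ≤ 1 - a := by linarith [this]
    have : a * (-v) ≤ (2/lamA) * (1 - a) := by
      rw [div_mul_eq_mul_div, le_div_iff₀ hlam]
      nlinarith
    have hpos : (0:ℝ) < 2/lamA := by positivity
    nlinarith
  have hsq : Real.exp (lamA * v) = a * a := by
    rw [ha, ← Real.exp_add]; congr 1; ring
  rw [hsq, habs]
  nlinarith [mul_le_mul_of_nonneg_right (mul_le_mul_of_nonneg_left ha1 hK) ha0.le]

lemma OU.cont_h (B : E →L[ℝ] E) (ω : ℝ → E) (hω : Continuous ω) :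
    Continuous (fun v : ℝ => exp (v • B) (ω v)) := by
  have h1 : Continuous (fun v : ℝ => exp (v • B)) :=
    exp_continuous.comp (continuous_id.smul continuous_const)
  exact h1.clm_apply hω

lemma OU.int_h (B : E →L[ℝ] E) (lamA K : ℝ) (hlam : 0 < lamA) (hK : 0 ≤ K)
    (ω : ℝ → E) (hω : Continuous ω)
    (hdecay : ∀ r ≤ (0:ℝ), ∀ y : E, ‖exp (r • B) y‖ ≤ Real.exp (lamA * r) * ‖y‖)
    (hgrow : ∀ t, ‖ω t‖ ≤ K + |t|) (a : ℝ) :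
    IntegrableOn (fun v : ℝ => exp (v • B) (ω v)) (Set.Iic a) := by
  have hcont := OU.cont_h B ω hω
  have hIic0 : IntegrableOn (fun v : ℝ => exp (v • B) (ω v)) (Set.Iic 0) := by
    apply Integrable.mono' (((OU.exp_int (by positivity : (0:ℝ) < lamA/2)).const_mul
      (K + 2/lamA)))
    · exact hcont.aestronglyMeasurable
    · rw [ae_restrict_iff' measurableSet_Iic]
      filter_upwards with v hv
      calc ‖exp (v • B) (ω v)‖ ≤ Real.exp (lamA * v) * ‖ω v‖ := hdecay v hv _
        _ ≤ Real.exp (lamA * v) * (K + |v|) := by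
            apply mul_le_mul_of_nonneg_left (hgrow v) (Real.exp_pos _).le
        _ ≤ (K + 2/lamA) * Real.exp ((lamA/2) * v) := by
            rw [mul_comm]; exact OU.weight hlam hK v hv
  have hIoc : IntegrableOn (fun v : ℝ => exp (v • B) (ω v)) (Set.Ioc 0 a) :=
    hcont.integrableOn_Ioc
  exact (hIic0.union hIoc).mono_set (fun v hv => by
    rcases le_or_gt v 0 with h | h
    · exact Or.inl h
    · exact Or.inr ⟨h, hv⟩)

lemma OU.int_const (B : E →L[ℝ] E) (lamA : ℝ) (hlam : 0 < lamA)
    (hdecay : ∀ r ≤ (0:ℝ), ∀ y : E, ‖exp (r • B) y‖ ≤ Real.exp (lamA * r) * ‖y‖)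
    (c : E) : IntegrableOn (fun r : ℝ => exp (r • B) c) (Set.Iic 0) := by
  apply Integrable.mono' ((OU.exp_int hlam).mul_const ‖c‖)
  · exact (OU.cont_h B (fun _ => c) continuous_const).aestronglyMeasurable
  · rw [ae_restrict_iff' measurableSet_Iic]
    filter_upwards with r hr
    exact hdecay r hr c

lemma OU.ftc (B : E →L[ℝ] E) (lamA : ℝ) (hlam : 0 < lamA)
    (hdecay : ∀ r ≤ (0:ℝ), ∀ y : E, ‖exp (r • B) y‖ ≤ Real.exp (lamA * r) * ‖y‖)
    (c : E) : B (∫ r in Set.Iic (0:ℝ), exp (r • B) c) = c := by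
  have hint : IntegrableOn (fun r : ℝ => exp (r • B) c) (Set.Iic 0) :=
    OU.int_const B lamA hlam hdecay c
  have hint' : IntegrableOn (fun r : ℝ => B (exp (r • B) c)) (Set.Iic 0) :=
    B.integrable_comp hint
  have hlim : Tendsto (fun r : ℝ => exp (r • B) c) atBot (nhds 0) := by
    apply squeeze_zero_norm' (a := fun r : ℝ => Real.exp (lamA * r) * ‖c‖)
      (by filter_upwards [Iic_mem_atBot (0:ℝ)] with r hr; exact hdecay r hr c)
    have h1 : Tendsto (fun r : ℝ => lamA * r) atBot atBot :=
        Tendsto.const_mul_atBot hlam tendsto_id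
    have h2 : Tendsto (fun r : ℝ => Real.exp (lamA * r)) atBot (nhds 0) :=
      Real.tendsto_exp_atBot.comp h1
    simpa using h2.mul_const ‖c‖
  have key : ∫ r in Set.Iic (0:ℝ), B (exp (r • B) c) = exp ((0:ℝ) • B) c - 0 := by
    apply integral_Iic_of_hasDerivAt_of_tendsto'
      (fun x _ => OU.exp_deriv_apply B c x) hint' hlim
  rw [← B.integral_comp_comm hint, key]
  have hz : (0:ℝ) • B = 0 := zero_smul ℝ B
  rw [hz, NormedSpace.exp_zero, ContinuousLinearMap.one_apply, sub_zero]

lemma OU.shift_pre (u : ℝ) : ((· + u) ⁻¹' Set.Iic u : Set ℝ) = Set.Iic 0 := by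
  ext r; simp

lemma OU.int_shift (B : E →L[ℝ] E) (lamA K : ℝ) (hlam : 0 < lamA) (hK : 0 ≤ K)
    (ω : ℝ → E) (hω : Continuous ω)
    (hdecay : ∀ r ≤ (0:ℝ), ∀ y : E, ‖exp (r • B) y‖ ≤ Real.exp (lamA * r) * ‖y‖)
    (hgrow : ∀ t, ‖ω t‖ ≤ K + |t|) (u : ℝ) :
    IntegrableOn (fun r : ℝ => exp ((r + u) • B) (ω (r + u))) (Set.Iic 0) := by
  have h := ((measurePreserving_add_right volume u).integrableOn_comp_preimage
    (MeasurableEquiv.addRight u).measurableEmbedding).mpr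
    (OU.int_h B lamA K hlam hK ω hω hdecay hgrow u)
  rw [OU.shift_pre u] at h
  simpa [Function.comp_def] using h

lemma OU.shift_integral (B : E →L[ℝ] E) (ω : ℝ → E) (u : ℝ) :
    ∫ r in Set.Iic (0:ℝ), exp ((r + u) • B) (ω (r + u))
      = ∫ v in Set.Iic u, exp (v • B) (ω v) := by
  have h := (measurePreserving_add_right volume u).setIntegral_preimage_emb
    (MeasurableEquiv.addRight u).measurableEmbedding
    (fun v => exp (v • B) (ω v)) (Set.Iic u)
  rw [OU.shift_pre u] at h
  exact h

lemma OU.repr (A : Matrix (Fin m) (Fin m) ℝ) (lamA K : ℝ) (hlam : 0 < lamA) (hK : 0 ≤ K)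
    (ω : ℝ → E) (hω : Continuous ω)
    (hdecay : ∀ r ≤ (0:ℝ), ∀ y : E,
      ‖exp (r • Matrix.toEuclideanCLM (𝕜 := ℝ) A) y‖ ≤ Real.exp (lamA * r) * ‖y‖)
    (hgrow : ∀ t, ‖ω t‖ ≤ K + |t|) (u : ℝ) :
    OUstat A ω u = ω u - Matrix.toEuclideanCLM (𝕜 := ℝ) A
      (exp ((-u) • Matrix.toEuclideanCLM (𝕜 := ℝ) A)
        (∫ v in Set.Iic u, exp (v • Matrix.toEuclideanCLM (𝕜 := ℝ) A) (ω v))) := by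
  set B := Matrix.toEuclideanCLM (𝕜 := ℝ) A with hB
  have hinteg : ∀ r : ℝ, Matrix.toEuclideanLin (exp (r • A)) (ω (r+u) - ω u)
      = exp (r • B) (ω (r+u)) - exp (r • B) (ω u) := by
    intro r
    have h1 : Matrix.toEuclideanLin (exp (r • A)) (ω (r+u) - ω u)
        = Matrix.toEuclideanCLM (𝕜 := ℝ) (exp (r • A)) (ω (r+u) - ω u) := rfl
    rw [h1, OU.exp_comm, map_sub]
  have hsplit : ∀ r : ℝ, exp (r • B) (ω (r+u))
      = exp ((-u) • B) (exp ((r+u) • B) (ω (r+u))) := by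
    intro r
    rw [OU.exp_split B r u, ContinuousLinearMap.mul_apply]
  have hshift := OU.int_shift B lamA K hlam hK ω hω hdecay hgrow u
  have hint1 : IntegrableOn (fun r : ℝ => exp (r • B) (ω (r+u))) (Set.Iic 0) := by
    have : (fun r : ℝ => exp (r • B) (ω (r+u)))
        = fun r : ℝ => exp ((-u) • B) (exp ((r+u) • B) (ω (r+u))) := funext hsplit
    rw [this]
    exact (exp ((-u) • B)).integrable_comp hshift
  have hint2 : IntegrableOn (fun r : ℝ => exp (r • B) (ω u)) (Set.Iic 0) :=
    OU.int_const B lamA hlam hdecay (ω u)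
  have hI1 : ∫ r in Set.Iic (0:ℝ), exp (r • B) (ω (r+u))
      = exp ((-u) • B) (∫ v in Set.Iic u, exp (v • B) (ω v)) := by
    calc ∫ r in Set.Iic (0:ℝ), exp (r • B) (ω (r+u))
        = ∫ r in Set.Iic (0:ℝ), exp ((-u) • B) (exp ((r+u) • B) (ω (r+u))) := by
          simp only [hsplit]
      _ = exp ((-u) • B) (∫ r in Set.Iic (0:ℝ), exp ((r+u) • B) (ω (r+u))) :=
          (ContinuousLinearMap.integral_comp_comm (exp ((-u) • B)) hshift)
      _ = exp ((-u) • B) (∫ v in Set.Iic u, exp (v • B) (ω v)) := by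
          rw [OU.shift_integral B ω u]
  show -(Matrix.toEuclideanLin A (∫ r in Set.Iic (0 : ℝ),
      Matrix.toEuclideanLin (NormedSpace.exp (r • A)) (ω (r + u) - ω u))) = _
  have hlin : ∀ x : E, Matrix.toEuclideanLin A x = B x := fun _ => rfl
  simp only [hinteg]
  rw [integral_sub hint1 hint2, hlin, map_sub, hI1, OU.ftc B lamA hlam hdecay (ω u)]
  abel

theorem ou_holder {m : ℕ} (A : Matrix (Fin m) (Fin m) ℝ) (lamA : ℝ)
    (hlam : 0 < lamA)
    (hA : ∀ y : EuclideanSpace ℝ (Fin m), lamA * ‖y‖ ^ 2 ≤ ⟪Matrix.toEuclideanLin A y, y⟫)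
    (ω : ℝ → EuclideanSpace ℝ (Fin m)) (hω : Continuous ω)
    (hsub_top : Tendsto (fun t : ℝ => ‖ω t‖ / |t|) atTop (nhds 0))
    (hsub_bot : Tendsto (fun t : ℝ => ‖ω t‖ / |t|) atBot (nhds 0))
    (η : ℝ) (hη0 : 0 < η) (hη1 : η < 1)
    (hωHolder : ∀ T₁ T₂ : ℝ, T₁ < T₂ → ∃ C : ℝ, ∀ s ∈ Set.Icc T₁ T₂, ∀ t ∈ Set.Icc T₁ T₂,
      s ≤ t → ‖ω t - ω s‖ ≤ C * (t - s) ^ η) :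
    ∀ T₁ T₂ : ℝ, T₁ < T₂ → ∃ C : ℝ, ∀ s ∈ Set.Icc T₁ T₂, ∀ t ∈ Set.Icc T₁ T₂,
      s ≤ t → ‖OUstat A ω t - OUstat A ω s‖ ≤ C * (t - s) ^ η := by
  intro T₁ T₂ hT
  set B : EuclideanSpace ℝ (Fin m) →L[ℝ] EuclideanSpace ℝ (Fin m) :=
    Matrix.toEuclideanCLM (𝕜 := ℝ) A with hBdef
  have hA' : ∀ y : EuclideanSpace ℝ (Fin m), lamA * ‖y‖ ^ 2 ≤ ⟪B y, y⟫ := hA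
  have hdecay := OU.decay B lamA hA'
  obtain ⟨K, hK0, hgrow⟩ := OU.growth ω hω hsub_top hsub_bot
  set h : ℝ → EuclideanSpace ℝ (Fin m) := fun v => exp (v • B) (ω v) with hhdef
  set F : ℝ → EuclideanSpace ℝ (Fin m) := fun u => ∫ v in Set.Iic u, h v with hFdef
  obtain ⟨C₀, hC₀⟩ := hωHolder T₁ T₂ hT
  have hrepr : ∀ u, OUstat A ω u = ω u - B (exp ((-u) • B) (F u)) :=
    OU.repr A lamA K hlam hK0 ω hω hdecay hgrow
  have hinth : ∀ a : ℝ, IntegrableOn h (Set.Iic a) :=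
    OU.int_h B lamA K hlam hK0 ω hω hdecay hgrow
  -- bounds on the compact interval
  obtain ⟨Mh, hMh⟩ := (isCompact_Icc (a := T₁) (b := T₂)).exists_bound_of_continuousOn
    (OU.cont_h B ω hω).continuousOn
  have hMh0 : 0 ≤ Mh := le_trans (norm_nonneg (h T₁)) (hMh T₁ ⟨le_refl _, hT.le⟩)
  have hgc : Continuous (fun u : ℝ => exp ((-u) • B)) :=
    exp_continuous.comp ((continuous_neg).smul continuous_const)
  obtain ⟨Me, hMe⟩ := (isCompact_Icc (a := T₁) (b := T₂)).exists_bound_of_continuousOn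
    hgc.continuousOn
  have hMe0 : 0 ≤ Me := le_trans (norm_nonneg _) (hMe T₁ ⟨le_refl _, hT.le⟩)
  have hgc' : Continuous (fun u : ℝ => B * exp ((-u) • B)) := continuous_const.mul hgc
  obtain ⟨DB, hDB⟩ := (isCompact_Icc (a := T₁) (b := T₂)).exists_bound_of_continuousOn
    hgc'.continuousOn
  have hDB0 : 0 ≤ DB := le_trans (norm_nonneg _) (hDB T₁ ⟨le_refl _, hT.le⟩)
  set MF : ℝ := ∫ v in Set.Iic T₂, ‖h v‖ with hMFdef
  have hMF0 : 0 ≤ MF := integral_nonneg (fun v => norm_nonneg _)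
  have hFb : ∀ s ∈ Set.Icc T₁ T₂, ‖F s‖ ≤ MF := by
    intro s hs
    calc ‖F s‖ ≤ ∫ v in Set.Iic s, ‖h v‖ := norm_integral_le_integral_norm _
      _ ≤ MF := by
          apply setIntegral_mono_set (hinth T₂).norm
          · filter_upwards with v using norm_nonneg _
          · exact HasSubset.Subset.eventuallyLE (Set.Iic_subset_Iic.mpr hs.2)
  have hFdiff : ∀ s ∈ Set.Icc T₁ T₂, ∀ t ∈ Set.Icc T₁ T₂, s ≤ t →
      ‖F t - F s‖ ≤ Mh * (t - s) := by
    intro s hs t ht hst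
    have h1 : F t - F s = ∫ v in s..t, h v :=
      intervalIntegral.integral_Iic_sub_Iic (hinth s) (hinth t)
    rw [h1]
    have h2 := intervalIntegral.norm_integral_le_of_norm_le_const (C := Mh) (f := h)
      (a := s) (b := t) (fun x hx => by
        rw [Set.uIoc_of_le hst] at hx
        exact hMh x ⟨le_trans hs.1 hx.1.le, le_trans hx.2 ht.2⟩)
    rwa [abs_of_nonneg (by linarith)] at h2
  have hediff : ∀ s ∈ Set.Icc T₁ T₂, ∀ t ∈ Set.Icc T₁ T₂, s ≤ t →
      ‖exp ((-t) • B) - exp ((-s) • B)‖ ≤ DB * (t - s) := by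
    intro s hs t ht hst
    have hder : ∀ u ∈ Set.Icc T₁ T₂, HasDerivWithinAt (fun u : ℝ => exp ((-u) • B))
        (-(B * exp ((-u) • B))) (Set.Icc T₁ T₂) u := by
      intro u _
      have h0 : HasDerivAt (fun v : ℝ => exp (v • B)) (B * exp ((-u) • B)) (-u) :=
        hasDerivAt_exp_smul_const' B (-u)
      have := HasDerivAt.scomp u h0 (hasDerivAt_neg u)
      simp only [neg_smul, one_smul] at this
      exact this.hasDerivWithinAt
    have hbound : ∀ u ∈ Set.Icc T₁ T₂, ‖-(B * exp ((-u) • B))‖ ≤ DB := by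
      intro u hu
      rw [norm_neg]
      exact hDB u hu
    have := (convex_Icc T₁ T₂).norm_image_sub_le_of_norm_hasDerivWithin_le hder hbound hs ht
    calc ‖exp ((-t) • B) - exp ((-s) • B)‖ ≤ DB * ‖t - s‖ := by simpa using this
      _ = DB * (t - s) := by rw [Real.norm_eq_abs, abs_of_nonneg (by linarith)]
  set L : ℝ := ‖B‖ * (Me * Mh + DB * MF) with hLdef
  have hL0 : 0 ≤ L := by positivity
  refine ⟨C₀ + L * (T₂ - T₁) ^ (1 - η), ?_⟩
  intro s hs t ht hst
  set δ : ℝ := t - s with hδdef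
  have hδ0 : 0 ≤ δ := by simp [hδdef]; linarith
  have hδle : δ ≤ T₂ - T₁ := by simp [hδdef]; linarith [hs.1, ht.2]
  have hδpow : δ ≤ (T₂ - T₁) ^ (1 - η) * δ ^ η := by
    calc δ = δ ^ ((1 - η) + η) := by
          have he1 : (1 - η) + η = (1:ℝ) := by ring
          rw [he1, Real.rpow_one]
      _ = δ ^ (1 - η) * δ ^ η := Real.rpow_add' hδ0 (by norm_num)
      _ ≤ (T₂ - T₁) ^ (1 - η) * δ ^ η :=
          mul_le_mul_of_nonneg_right (Real.rpow_le_rpow hδ0 hδle (by linarith))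
            (Real.rpow_nonneg hδ0 η)
  have hP : ‖B (exp ((-t) • B) (F t)) - B (exp ((-s) • B) (F s))‖ ≤ L * δ := by
    have hsplit : exp ((-t) • B) (F t) - exp ((-s) • B) (F s)
        = exp ((-t) • B) (F t - F s) + (exp ((-t) • B) - exp ((-s) • B)) (F s) := by
      rw [map_sub, ContinuousLinearMap.sub_apply]
      abel
    calc ‖B (exp ((-t) • B) (F t)) - B (exp ((-s) • B) (F s))‖
        = ‖B (exp ((-t) • B) (F t) - exp ((-s) • B) (F s))‖ := by rw [map_sub]
      _ ≤ ‖B‖ * ‖exp ((-t) • B) (F t) - exp ((-s) • B) (F s)‖ := B.le_opNorm _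
      _ ≤ ‖B‖ * (‖exp ((-t) • B) (F t - F s)‖
            + ‖(exp ((-t) • B) - exp ((-s) • B)) (F s)‖) := by
          apply mul_le_mul_of_nonneg_left _ (norm_nonneg B)
          rw [hsplit]
          exact norm_add_le _ _
      _ ≤ ‖B‖ * (Me * (Mh * δ) + DB * δ * MF) := by
          apply mul_le_mul_of_nonneg_left _ (norm_nonneg B)
          apply add_le_add
          · calc ‖exp ((-t) • B) (F t - F s)‖
                ≤ ‖exp ((-t) • B)‖ * ‖F t - F s‖ := (exp ((-t) • B)).le_opNorm _
              _ ≤ Me * (Mh * δ) := by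
                  apply mul_le_mul (hMe t ht) (hFdiff s hs t ht hst) (norm_nonneg _) hMe0
          · calc ‖(exp ((-t) • B) - exp ((-s) • B)) (F s)‖
                ≤ ‖exp ((-t) • B) - exp ((-s) • B)‖ * ‖F s‖ :=
                  ContinuousLinearMap.le_opNorm _ _
              _ ≤ DB * δ * MF := by
                  apply mul_le_mul (hediff s hs t ht hst) (hFb s hs) (norm_nonneg _)
                  positivity
      _ = L * δ := by rw [hLdef]; ring
  calc ‖OUstat A ω t - OUstat A ω s‖
      = ‖(ω t - ω s) - (B (exp ((-t) • B) (F t)) - B (exp ((-s) • B) (F s)))‖ := by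
        rw [hrepr t, hrepr s]
        congr 1
        abel
    _ ≤ ‖ω t - ω s‖ + ‖B (exp ((-t) • B) (F t)) - B (exp ((-s) • B) (F s))‖ :=
        norm_sub_le _ _
    _ ≤ C₀ * δ ^ η + L * δ := add_le_add (hC₀ s hs t ht hst) hP
    _ ≤ C₀ * δ ^ η + L * ((T₂ - T₁) ^ (1 - η) * δ ^ η) := by
        apply add_le_add_right
        apply mul_le_mul_of_nonneg_left hδpow hL0
    _ = (C₀ + L * (T₂ - T₁) ^ (1 - η)) * δ ^ η := by ring

end OUaux
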